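/- Let H be a real Hilbert space and (J,≤) a partially ordered set in which every principal down-set {i ∈ J : i ≤ j} is finite. Let (W_i)_{i∈J} be pairwise orthogonal closed subspaces of H with W_i ≠ {0} for every i, set V_j := ∑_{i ≤ j} W_i, let a, b : J → (0,∞), and let C > 0. Then the inequality ∑_{i∈J} b_i ‖w_i‖² ≤ C² · inf { ∑_{j∈F} a_j ‖v_j‖² : F ⊆ J finite, v_j ∈ V_j, ∑_{j∈F} v_j = f } holds for every f = ∑_i w_i (w_i ∈ W_i, finitely many nonzero) in the algebraic span of the W_i if and only if ∑_{j∈J, j ≥ i} a_j⁻¹ ≤ C² b_i⁻¹ for every i ∈ J (the sum on the left taken in [0,∞]). -/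

import Mathlib

open scoped ENNReal

section Aux

variable {H : Type*} [NormedAddCommGroup H] [InnerProductSpace ℝ H]

/-- Cauchy–Schwarz with weights. -/
lemma aux_cs {J : Type*} (G : Finset J) (x : J → H) (a : J → ℝ) (ha : ∀ j, 0 < a j) :
    ‖∑ j ∈ G, x j‖ ^ 2 ≤ (∑ j ∈ G, (a j)⁻¹) * ∑ j ∈ G, a j * ‖x j‖ ^ 2 := by
  have h1 : ‖∑ j ∈ G, x j‖ ≤ ∑ j ∈ G, ‖x j‖ := norm_sum_le _ _
  have h2 : (∑ j ∈ G, ‖x j‖) ^ 2 ≤ (∑ j ∈ G, (a j)⁻¹) * ∑ j ∈ G, a j * ‖x j‖ ^ 2 := by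
    have key := Finset.sum_mul_sq_le_sq_mul_sq G (fun j => (Real.sqrt (a j))⁻¹)
      (fun j => Real.sqrt (a j) * ‖x j‖)
    have hs : ∀ j, Real.sqrt (a j) ≠ 0 := fun j => ne_of_gt (Real.sqrt_pos.2 (ha j))
    have e1 : ∀ j ∈ G, (Real.sqrt (a j))⁻¹ * (Real.sqrt (a j) * ‖x j‖) = ‖x j‖ := by
      intro j _
      rw [← mul_assoc, inv_mul_cancel₀ (hs j), one_mul]
    have e2 : ∀ j ∈ G, ((Real.sqrt (a j))⁻¹) ^ 2 = (a j)⁻¹ := by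
      intro j _
      rw [inv_pow, Real.sq_sqrt (ha j).le]
    have e3 : ∀ j ∈ G, (Real.sqrt (a j) * ‖x j‖) ^ 2 = a j * ‖x j‖ ^ 2 := by
      intro j _
      rw [mul_pow, Real.sq_sqrt (ha j).le]
    rw [Finset.sum_congr rfl e1, Finset.sum_congr rfl e2, Finset.sum_congr rfl e3] at key
    exact key
  exact le_trans (pow_le_pow_left₀ (norm_nonneg _) h1 2) h2

/-- Pythagoras for pairwise-orthogonal families. -/
lemma aux_pyth {J : Type*} (S : Finset J) (x : J → H)
    (hx : ∀ i ∈ S, ∀ k ∈ S, i ≠ k → inner ℝ (x i) (x k) = (0 : ℝ)) :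
    ‖∑ i ∈ S, x i‖ ^ 2 = ∑ i ∈ S, ‖x i‖ ^ 2 := by
  rw [← real_inner_self_eq_norm_sq, sum_inner]
  refine Finset.sum_congr rfl (fun i hi => ?_)
  rw [inner_sum, Finset.sum_eq_single i (fun k hk hki => hx i hi k hk (Ne.symm hki)) (by tauto),
    real_inner_self_eq_norm_sq]

end Aux

/-- Corollary 1.
In the setting of pairwise orthogonal closed nonzero subspaces `(W i)` of a real Hilbert
space `H`, indexed by a poset `J` with finite principal down-sets, with `V j = ∑_{i ≤ j} W i`
and positive weights `a, b` and `C > 0`: the estimate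
`∑ i, b i ‖w i‖² ≤ C² inf { ∑_{j∈F} a j ‖v j‖² : v j ∈ V j, ∑_{j∈F} v j = f }` holds for every
`f = ∑ i, w i` (`w i ∈ W i`, finitely many nonzero) in the algebraic span of the `W i`
if and only if `∑_{j ≥ i} (a j)⁻¹ ≤ C² (b i)⁻¹` for every `i` (sum taken in `[0,∞]`). -/
theorem stmt9 {H : Type*} [NormedAddCommGroup H] [InnerProductSpace ℝ H] [CompleteSpace H]
    {J : Type*} [PartialOrder J] (hJ : ∀ j : J, {i | i ≤ j}.Finite)
    (W : J → Submodule ℝ H) (hWc : ∀ i, IsClosed (W i : Set H))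
    (hortho : ∀ i j, i ≠ j → ∀ u ∈ W i, ∀ v ∈ W j, inner ℝ u v = (0 : ℝ))
    (hWne : ∀ i, W i ≠ ⊥)
    (a b : J → ℝ) (ha : ∀ j, 0 < a j) (hb : ∀ j, 0 < b j) (C : ℝ) (hC : 0 < C) :
    (∀ (w : J → H), (∀ i, w i ∈ W i) → ∀ hwfin : (Function.support w).Finite,
        ∑' i, b i * ‖w i‖ ^ 2 ≤
          C ^ 2 * sInf {r : ℝ | ∃ (F : Finset J) (v : J → H),
            (∀ j ∈ F, v j ∈ (⨆ i ≤ j, W i : Submodule ℝ H)) ∧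
            (∑ j ∈ F, v j) = ∑ i ∈ hwfin.toFinset, w i ∧
            r = ∑ j ∈ F, a j * ‖v j‖ ^ 2}) ↔
    (∀ i : J, ∑' j : {j : J // i ≤ j}, ENNReal.ofReal ((a (j : J))⁻¹) ≤
        ENNReal.ofReal (C ^ 2 * (b i)⁻¹)) := by
  classical
  haveI : ∀ i, CompleteSpace (W i) := fun i => (hWc i).completeSpace_coe
  -- membership of W i in V j when i ≤ j
  have hWV : ∀ {i j : J}, i ≤ j → W i ≤ (⨆ i ≤ j, W i : Submodule ℝ H) := by
    intro i j hij
    exact le_iSup_of_le i (le_iSup_of_le hij le_rfl)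
  constructor
  · -- forward direction
    intro hmain i
    rw [ENNReal.tsum_eq_iSup_sum]
    refine iSup_le fun G => ?_
    rcases G.eq_empty_or_nonempty with rfl | hGne
    · simp
    obtain ⟨e, heW, hene⟩ := (Submodule.ne_bot_iff _).1 (hWne i)
    set lam := ∑ g ∈ G, (a (g : J))⁻¹ with hlamdef
    have hlam : 0 < lam := Finset.sum_pos (fun g _ => inv_pos.2 (ha _)) hGne
    set w : J → H := fun k => if k = i then e else 0 with hwdef
    have hw : ∀ k, w k ∈ W k := by
      intro k
      by_cases hk : k = i
      · subst hk; simpa [hwdef] using heW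
      · simp [hwdef, hk]
    have hwfin : (Function.support w).Finite := by
      apply Set.Finite.subset (Set.finite_singleton i)
      intro k hk
      simp only [Function.mem_support, hwdef] at hk
      rcases eq_or_ne k i with h | h
      · simp [h]
      · simp [h] at hk
    have hmain' := hmain w hw hwfin
    have htsum : ∑' k, b k * ‖w k‖ ^ 2 = b i * ‖e‖ ^ 2 := by
      rw [tsum_eq_single i (fun k hk => by simp [hwdef, hk])]
      simp [hwdef]
    have hiT : i ∈ hwfin.toFinset := by
      simp [Set.Finite.mem_toFinset, Function.mem_support, hwdef, hene]
    have hf : ∑ k ∈ hwfin.toFinset, w k = e := by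
      rw [Finset.sum_eq_single i (fun k _ hk => by simp [hwdef, hk]) (fun h => absurd hiT h)]
      simp [hwdef]
    -- the competitor decomposition
    set F : Finset J := G.map ⟨Subtype.val, Subtype.val_injective⟩ with hFdef
    set v : J → H := fun j => ((a j)⁻¹ / lam) • e with hvdef
    have hsumF : ∀ (f : J → ℝ), ∑ j ∈ F, f j = ∑ g ∈ G, f (g : J) := by
      intro f
      rw [hFdef]
      exact Finset.sum_map G ⟨Subtype.val, Subtype.val_injective⟩ f
    have hrmem : (‖e‖ ^ 2 / lam) ∈ {r : ℝ | ∃ (F : Finset J) (v : J → H),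
        (∀ j ∈ F, v j ∈ (⨆ i' ≤ j, W i' : Submodule ℝ H)) ∧
        (∑ j ∈ F, v j) = ∑ k ∈ hwfin.toFinset, w k ∧
        r = ∑ j ∈ F, a j * ‖v j‖ ^ 2} := by
      refine ⟨F, v, ?_, ?_, ?_⟩
      · intro j hj
        rw [hFdef, Finset.mem_map] at hj
        obtain ⟨g, -, rfl⟩ := hj
        exact hWV g.2 (Submodule.smul_mem _ _ heW)
      · rw [hf, hvdef]
        simp only
        rw [← Finset.sum_smul]
        have : ∑ j ∈ F, (a j)⁻¹ / lam = 1 := by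
          rw [← Finset.sum_div, hsumF (fun j => (a j)⁻¹), ← hlamdef, div_self hlam.ne']
        rw [this, one_smul]
      · rw [hvdef]
        have hstep : ∀ j ∈ F, a j * ‖((a j)⁻¹ / lam) • e‖ ^ 2 = (a j)⁻¹ / lam ^ 2 * ‖e‖ ^ 2 := by
          intro j _
          have h4 : a j * ((a j)⁻¹ / lam) ^ 2 = (a j)⁻¹ / lam ^ 2 := by
            rw [div_pow, sq ((a j)⁻¹), ← mul_div_assoc, ← mul_assoc,
              mul_inv_cancel₀ (ha j).ne', one_mul]
          rw [norm_smul, mul_pow, Real.norm_eq_abs, sq_abs, ← mul_assoc, h4]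
        rw [Finset.sum_congr rfl hstep, ← Finset.sum_mul, ← Finset.sum_div,
          hsumF (fun j => (a j)⁻¹), ← hlamdef]
        field_simp [hlam.ne']
    have hbdd : BddBelow {r : ℝ | ∃ (F : Finset J) (v : J → H),
        (∀ j ∈ F, v j ∈ (⨆ i' ≤ j, W i' : Submodule ℝ H)) ∧
        (∑ j ∈ F, v j) = ∑ k ∈ hwfin.toFinset, w k ∧
        r = ∑ j ∈ F, a j * ‖v j‖ ^ 2} := by
      refine ⟨0, fun r hr => ?_⟩
      obtain ⟨F', v', _, _, rfl⟩ := hr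
      exact Finset.sum_nonneg fun j _ => mul_nonneg (ha j).le (by positivity)
    have h1 : b i * ‖e‖ ^ 2 ≤ C ^ 2 * (‖e‖ ^ 2 / lam) := by
      calc b i * ‖e‖ ^ 2 = ∑' k, b k * ‖w k‖ ^ 2 := htsum.symm
        _ ≤ C ^ 2 * sInf _ := hmain'
        _ ≤ C ^ 2 * (‖e‖ ^ 2 / lam) := by
            exact mul_le_mul_of_nonneg_left (csInf_le hbdd hrmem) (by positivity)
    have he2 : (0:ℝ) < ‖e‖ ^ 2 := by
      have : 0 < ‖e‖ := norm_pos_iff.2 hene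
      positivity
    have hfinal : lam ≤ C ^ 2 * (b i)⁻¹ := by
      rw [← div_eq_mul_inv, le_div_iff₀ (hb i)]
      have h2 : b i * ‖e‖ ^ 2 * lam ≤ C ^ 2 * ‖e‖ ^ 2 := by
        have := mul_le_mul_of_nonneg_right h1 hlam.le
        calc b i * ‖e‖ ^ 2 * lam ≤ C ^ 2 * (‖e‖ ^ 2 / lam) * lam := this
          _ = C ^ 2 * ‖e‖ ^ 2 := by field_simp
      nlinarith [h2, he2, hlam]
    calc ∑ g ∈ G, ENNReal.ofReal ((a (g : J))⁻¹)
        = ENNReal.ofReal lam := by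
          rw [hlamdef, ENNReal.ofReal_sum_of_nonneg (fun g _ => (inv_pos.2 (ha _)).le)]
      _ ≤ ENNReal.ofReal (C ^ 2 * (b i)⁻¹) := ENNReal.ofReal_le_ofReal hfinal
  · -- reverse direction
    intro hcond w hw hwfin
    set T := hwfin.toFinset with hTdef
    have hwT : ∀ k, k ∉ T → w k = 0 := by
      intro k hk
      by_contra h
      exact hk (by simp [hTdef, Set.Finite.mem_toFinset, Function.mem_support, h])
    have htsum : ∑' k, b k * ‖w k‖ ^ 2 = ∑ k ∈ T, b k * ‖w k‖ ^ 2 :=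
      tsum_eq_sum (fun k hk => by rw [hwT k hk]; simp)
    rw [htsum]
    -- the key estimate for each element of the set
    have hkey : ∀ r ∈ {r : ℝ | ∃ (F : Finset J) (v : J → H),
        (∀ j ∈ F, v j ∈ (⨆ i ≤ j, W i : Submodule ℝ H)) ∧
        (∑ j ∈ F, v j) = ∑ k ∈ T, w k ∧
        r = ∑ j ∈ F, a j * ‖v j‖ ^ 2},
        (∑ k ∈ T, b k * ‖w k‖ ^ 2) / C ^ 2 ≤ r := by
      intro r hr
      obtain ⟨F, v, hvV, hsum, rfl⟩ := hr
      -- decompose each v j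
      have hdec : ∀ j : J, ∃ c : J →₀ H, (∀ i, c i ∈ W i) ∧ (∀ i, ¬ i ≤ j → c i = 0) ∧
          (c.sum fun _ x => x) = (if j ∈ F then v j else 0) := by
        intro j
        by_cases hj : j ∈ F
        · have hv := hvV j hj
          rw [show (⨆ i ≤ j, W i : Submodule ℝ H) = ⨆ i, ⨆ _ : i ≤ j, W i from rfl,
            Submodule.mem_iSup_iff_exists_finsupp] at hv
          obtain ⟨c, hc1, hc2⟩ := hv
          refine ⟨c, fun i => ?_, fun i hij => ?_, by simp [hj, hc2]⟩
          · exact (iSup_le fun _ => le_rfl : (⨆ _ : i ≤ j, W i) ≤ W i) (hc1 i)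
          · have := hc1 i
            rw [iSup_neg hij] at this
            simpa using this
        · exact ⟨0, by simp, by simp, by simp [hj]⟩
      choose c hc1 hc2 hc3 using hdec
      -- orthogonal projections recover the components
      have hproj : ∀ k : J, w k = ∑ j ∈ F, c j k := by
        intro k
        have hP := congrArg (fun x : H => (((W k).orthogonalProjectionOnto) x : H)) hsum
        simp only [map_sum, Submodule.coe_sum] at hP
        have hPW : ∀ x : H, ∀ i : J, x ∈ W i →
            (((W k).orthogonalProjectionOnto) x : H) = if i = k then x else 0 := by
          intro x i hx
          by_cases hik : i = k
          · subst hik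
            simp [Submodule.coe_orthogonalProjectionOnto_apply, Submodule.starProjection_eq_self_iff.2 hx]
          · rw [if_neg hik, Submodule.orthogonalProjectionOnto_apply_of_mem_orthogonal]
            · simp
            · rw [Submodule.mem_orthogonal]
              intro u hu
              exact hortho k i (fun h => hik h.symm) u hu x hx
        have hleft : ∀ j ∈ F, (((W k).orthogonalProjectionOnto) (v j) : H) = c j k := by
          intro j hj
          have hvj : v j = ∑ i ∈ (c j).support, c j i := by
            have := hc3 j
            rw [if_pos hj] at this
            rw [← this, Finsupp.sum]
          rw [hvj, map_sum, Submodule.coe_sum]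
          rw [Finset.sum_congr rfl (fun i hi => hPW (c j i) i (hc1 j i))]
          rw [Finset.sum_ite_eq' ((c j).support) k (c j)]
          by_cases hk : k ∈ (c j).support
          · rw [if_pos hk]
          · rw [if_neg hk, (Finsupp.notMem_support_iff.1 hk)]
        have hright : ∀ k' ∈ T, (((W k).orthogonalProjectionOnto) (w k') : H)
            = if k' = k then w k' else 0 := fun k' _ => hPW (w k') k' (hw k')
        rw [Finset.sum_congr rfl hleft, Finset.sum_congr rfl hright,
          Finset.sum_ite_eq' T k w] at hP
        by_cases hk : k ∈ T
        · rw [if_pos hk] at hP; exact hP.symm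
        · rw [if_neg hk] at hP
          rw [hwT k hk, ← hP]
      -- per-index weighted Cauchy–Schwarz estimate
      have hperk : ∀ k ∈ T, b k * ‖w k‖ ^ 2 ≤
          C ^ 2 * ∑ j ∈ F.filter (fun j => k ≤ j), a j * ‖c j k‖ ^ 2 := by
        intro k _
        set Fk := F.filter (fun j => k ≤ j) with hFkdef
        have hwk : w k = ∑ j ∈ Fk, c j k := by
          rw [hproj k, hFkdef, Finset.sum_filter]
          refine Finset.sum_congr rfl (fun j _ => ?_)
          by_cases hkj : k ≤ j
          · rw [if_pos hkj]
          · rw [if_neg hkj, hc2 j k hkj]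
        have hcs : ‖w k‖ ^ 2 ≤ (∑ j ∈ Fk, (a j)⁻¹) * ∑ j ∈ Fk, a j * ‖c j k‖ ^ 2 := by
          rw [hwk]; exact aux_cs Fk (fun j => c j k) a ha
        -- bound on the inverse-weight sum from the hypothesis
        have hinv : ∑ j ∈ Fk, (a j)⁻¹ ≤ C ^ 2 * (b k)⁻¹ := by
          have hG : ∀ j ∈ Fk, k ≤ j := fun j hj => (Finset.mem_filter.1 hj).2
          set G : Finset {j : J // k ≤ j} :=
            Fk.attach.map ⟨fun x => (⟨x.1, hG x.1 x.2⟩ : {j : J // k ≤ j}),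
              by
                intro x y h
                simp only [Subtype.mk.injEq] at h
                exact Subtype.ext h⟩ with hGdef
          have hsumG : ∑ g ∈ G, ENNReal.ofReal ((a (g : J))⁻¹)
              = ∑ j ∈ Fk, ENNReal.ofReal ((a j)⁻¹) := by
            rw [hGdef, Finset.sum_map]
            exact Finset.sum_attach Fk (fun j => ENNReal.ofReal ((a j)⁻¹))
          have h1 : ∑ j ∈ Fk, ENNReal.ofReal ((a j)⁻¹) ≤
              ENNReal.ofReal (C ^ 2 * (b k)⁻¹) :=
            hsumG ▸ le_trans (ENNReal.sum_le_tsum G) (hcond k)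
          rw [← ENNReal.ofReal_sum_of_nonneg (fun g _ => (inv_pos.2 (ha _)).le)] at h1
          exact (ENNReal.ofReal_le_ofReal_iff (mul_nonneg (by positivity) (inv_nonneg.2 (hb k).le))).1 h1
        have hnn : (0:ℝ) ≤ ∑ j ∈ Fk, a j * ‖c j k‖ ^ 2 :=
          Finset.sum_nonneg fun j _ => mul_nonneg (ha j).le (by positivity)
        calc b k * ‖w k‖ ^ 2
            ≤ b k * ((∑ j ∈ Fk, (a j)⁻¹) * ∑ j ∈ Fk, a j * ‖c j k‖ ^ 2) :=
              mul_le_mul_of_nonneg_left hcs (hb k).le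
          _ = (b k * ∑ j ∈ Fk, (a j)⁻¹) * ∑ j ∈ Fk, a j * ‖c j k‖ ^ 2 := by ring
          _ ≤ C ^ 2 * ∑ j ∈ Fk, a j * ‖c j k‖ ^ 2 := by
              refine mul_le_mul_of_nonneg_right ?_ hnn
              calc b k * ∑ j ∈ Fk, (a j)⁻¹ ≤ b k * (C ^ 2 * (b k)⁻¹) :=
                    mul_le_mul_of_nonneg_left hinv (hb k).le
                _ = C ^ 2 := by
                    rw [mul_comm (C ^ 2), ← mul_assoc, mul_inv_cancel₀ (hb k).ne', one_mul]
      -- sum the per-index estimates and swap the order of summation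
      have hswap : ∑ k ∈ T, ∑ j ∈ F.filter (fun j => k ≤ j), a j * ‖c j k‖ ^ 2
          = ∑ j ∈ F, ∑ k ∈ T.filter (fun k => k ≤ j), a j * ‖c j k‖ ^ 2 := by
        simp only [Finset.sum_filter]
        exact Finset.sum_comm
      have hinner : ∀ j ∈ F, ∑ k ∈ T.filter (fun k => k ≤ j), a j * ‖c j k‖ ^ 2
          ≤ a j * ‖v j‖ ^ 2 := by
        intro j hj
        have hvj : v j = ∑ i ∈ (c j).support, c j i := by
          have := hc3 j
          rw [if_pos hj] at this
          rw [← this, Finsupp.sum]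
        have hpyth : ‖v j‖ ^ 2 = ∑ i ∈ (c j).support, ‖c j i‖ ^ 2 := by
          rw [hvj]
          exact aux_pyth _ _ (fun i _ k _ hik => hortho i k hik _ (hc1 j i) _ (hc1 j k))
        rw [← Finset.mul_sum]
        refine mul_le_mul_of_nonneg_left ?_ (ha j).le
        rw [hpyth]
        calc ∑ k ∈ T.filter (fun k => k ≤ j), ‖c j k‖ ^ 2
            ≤ ∑ k ∈ T.filter (fun k => k ≤ j) ∪ (c j).support, ‖c j k‖ ^ 2 :=
              Finset.sum_le_sum_of_subset_of_nonneg Finset.subset_union_left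
                (fun k _ _ => by positivity)
          _ = ∑ k ∈ (c j).support, ‖c j k‖ ^ 2 := by
              refine (Finset.sum_subset Finset.subset_union_right (fun k _ hk => ?_)).symm
              rw [Finsupp.notMem_support_iff.1 hk]
              simp
      have hmain2 : ∑ k ∈ T, b k * ‖w k‖ ^ 2 ≤ C ^ 2 * ∑ j ∈ F, a j * ‖v j‖ ^ 2 := by
        calc ∑ k ∈ T, b k * ‖w k‖ ^ 2
            ≤ ∑ k ∈ T, C ^ 2 * ∑ j ∈ F.filter (fun j => k ≤ j), a j * ‖c j k‖ ^ 2 :=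
              Finset.sum_le_sum hperk
          _ = C ^ 2 * ∑ k ∈ T, ∑ j ∈ F.filter (fun j => k ≤ j), a j * ‖c j k‖ ^ 2 := by
              rw [Finset.mul_sum]
          _ = C ^ 2 * ∑ j ∈ F, ∑ k ∈ T.filter (fun k => k ≤ j), a j * ‖c j k‖ ^ 2 := by
              rw [hswap]
          _ ≤ C ^ 2 * ∑ j ∈ F, a j * ‖v j‖ ^ 2 := by
              refine mul_le_mul_of_nonneg_left (Finset.sum_le_sum hinner) (by positivity)
      rw [div_le_iff₀ (by positivity : (0:ℝ) < C ^ 2)]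
      calc ∑ k ∈ T, b k * ‖w k‖ ^ 2 ≤ C ^ 2 * ∑ j ∈ F, a j * ‖v j‖ ^ 2 := hmain2
        _ = (∑ j ∈ F, a j * ‖v j‖ ^ 2) * C ^ 2 := by ring
    -- conclude via sInf
    have hSne : {r : ℝ | ∃ (F : Finset J) (v : J → H),
        (∀ j ∈ F, v j ∈ (⨆ i ≤ j, W i : Submodule ℝ H)) ∧
        (∑ j ∈ F, v j) = ∑ k ∈ T, w k ∧
        r = ∑ j ∈ F, a j * ‖v j‖ ^ 2}.Nonempty := by
      refine ⟨∑ j ∈ T, a j * ‖w j‖ ^ 2, T, w, fun j _ => hWV le_rfl (hw j), rfl, rfl⟩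
    have := le_csInf hSne hkey
    rw [div_le_iff₀ (by positivity : (0:ℝ) < C ^ 2)] at this
    calc ∑ k ∈ T, b k * ‖w k‖ ^ 2 ≤ sInf _ * C ^ 2 := this
      _ = C ^ 2 * sInf _ := by ring
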